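/- Let n ≥ 2, K ∈ 𝒦 with constant C₀ in the size bound, let f : ℝ^{n−1} → ℝ be Lipschitz, L > max{1, Lip(f)}, let ν be a finite Radon measure on ℝⁿ, and let g ∈ L¹(ν). Then for every x ∈ C_f, every y ∈ Γ(x), with r = |x − y|: ∫_{H_f^− ∩ B(x,2r)} |K(y−z)| |g(z)| dν(z) ≤ (16L)^{n−1} C₀ M_ν g(x), where M_ν g(x) = sup_{ρ>0} ρ^{1−n} ∫_{B(x,ρ)} |g| dν. -/

import Mathlib

open MeasureTheory Metric ENNReal Filter Set Topology

noncomputable section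

/-- Projection of a point of `ℝ^(m+1)` onto its first `m` coordinates. -/
def proj {m : ℕ} (p : EuclideanSpace ℝ (Fin (m + 1))) : EuclideanSpace ℝ (Fin m) :=
  WithLp.toLp 2 (fun i : Fin m => p i.castSucc)

/-- The graph `C_f` of `f : ℝ^m → ℝ`, as a subset of `ℝ^(m+1)`. -/
def graphSet {m : ℕ} (f : EuclideanSpace ℝ (Fin m) → ℝ) :
    Set (EuclideanSpace ℝ (Fin (m + 1))) :=
  {p | p (Fin.last m) = f (proj p)}

/-- The open region `H_f^-` below the graph of `f`. -/
def lowerSet {m : ℕ} (f : EuclideanSpace ℝ (Fin m) → ℝ) :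
    Set (EuclideanSpace ℝ (Fin (m + 1))) :=
  {p | p (Fin.last m) < f (proj p)}

/-- The cone `Γ((u₀, f u₀)) = {(u,t) : t - f u₀ > 4 L |u - u₀|}`. -/
def cone {m : ℕ} (f : EuclideanSpace ℝ (Fin m) → ℝ) (L : ℝ)
    (u₀ : EuclideanSpace ℝ (Fin m)) : Set (EuclideanSpace ℝ (Fin (m + 1))) :=
  {p | 4 * L * ‖proj p - u₀‖ < p (Fin.last m) - f u₀}

/-- The maximal function `M_ν g(x) = sup_{ρ>0} ρ^{1-n} ∫_{B(x,ρ)} |g| dν` (here `n = m + 1`,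
so `1 - n = -m`). -/
def radialMax {m : ℕ} (ν : Measure (EuclideanSpace ℝ (Fin (m + 1))))
    (g : EuclideanSpace ℝ (Fin (m + 1)) → ℝ)
    (x : EuclideanSpace ℝ (Fin (m + 1))) : ℝ≥0∞ :=
  ⨆ (ρ : ℝ) (_ : 0 < ρ),
    ENNReal.ofReal (ρ ^ (-(m : ℝ))) * ∫⁻ y in closedBall x ρ, ENNReal.ofReal |g y| ∂ν

lemma abs_last_le {m : ℕ} (p : EuclideanSpace ℝ (Fin (m + 1))) :
    |p (Fin.last m)| ≤ ‖p‖ := by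
  rw [EuclideanSpace.norm_eq, ← Real.sqrt_sq_eq_abs]
  apply Real.sqrt_le_sqrt
  have := Finset.single_le_sum (f := fun i => ‖p i‖ ^ 2)
    (fun i _ => sq_nonneg _) (Finset.mem_univ (Fin.last m))
  simpa [Real.norm_eq_abs, sq_abs] using this

lemma norm_proj_le {m : ℕ} (p : EuclideanSpace ℝ (Fin (m + 1))) :
    ‖proj p‖ ≤ ‖p‖ := by
  rw [EuclideanSpace.norm_eq, EuclideanSpace.norm_eq]
  apply Real.sqrt_le_sqrt
  rw [Fin.sum_univ_castSucc]
  simp only [proj]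
  exact le_add_of_nonneg_right (sq_nonneg _)

lemma norm_le_proj_add {m : ℕ} (p : EuclideanSpace ℝ (Fin (m + 1))) :
    ‖p‖ ≤ ‖proj p‖ + |p (Fin.last m)| := by
  have hsum : ‖p‖ ^ 2 = ‖proj p‖ ^ 2 + |p (Fin.last m)| ^ 2 := by
    rw [EuclideanSpace.norm_eq, EuclideanSpace.norm_eq,
      Real.sq_sqrt (by positivity), Real.sq_sqrt (by positivity),
      Fin.sum_univ_castSucc]
    simp [proj, sq_abs]
  nlinarith [norm_nonneg p, norm_nonneg (proj p), abs_nonneg (p (Fin.last m)),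
    mul_nonneg (norm_nonneg (proj p)) (abs_nonneg (p (Fin.last m)))]

lemma proj_sub {m : ℕ} (p q : EuclideanSpace ℝ (Fin (m + 1))) :
    proj (p - q) = proj p - proj q := by ext i; simp [proj]

lemma norm_proj_sub_le {m : ℕ} (p q : EuclideanSpace ℝ (Fin (m + 1))) :
    ‖proj p - proj q‖ ≤ ‖p - q‖ := by
  rw [← proj_sub]; exact norm_proj_le _

/-- Geometric key: for `x` on the graph, `y` in the cone over `x`, and `z` below the
graph, `‖x - y‖ ≤ 8 L ‖y - z‖`. -/
lemma geom_key {m : ℕ} (f : EuclideanSpace ℝ (Fin m) → ℝ) (Lf : NNReal)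
    (hf : LipschitzWith Lf f) (L : ℝ) (hL : max 1 (Lf : ℝ) < L)
    (x y z : EuclideanSpace ℝ (Fin (m + 1)))
    (hx : x ∈ graphSet f) (hy : y ∈ cone f L (proj x)) (hz : z ∈ lowerSet f) :
    ‖x - y‖ ≤ 8 * L * ‖y - z‖ := by
  have hL1 : 1 < L := lt_of_le_of_lt (le_max_left _ _) hL
  have hLf : (Lf : ℝ) ≤ L := le_of_lt (lt_of_le_of_lt (le_max_right _ _) hL)
  set a := ‖proj y - proj x‖ with ha
  set b := ‖y - z‖ with hb
  set A := y (Fin.last m) - f (proj x) with hA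
  have h1 : 4 * L * a < A := hy
  have lip : ∀ u v : EuclideanSpace ℝ (Fin m), f u - f v ≤ L * ‖u - v‖ := by
    intro u v
    have := hf.dist_le_mul u v
    rw [dist_eq_norm, dist_eq_norm] at this
    have h2 : f u - f v ≤ |f u - f v| := le_abs_self _
    have h3 : (Lf : ℝ) * ‖u - v‖ ≤ L * ‖u - v‖ :=
      mul_le_mul_of_nonneg_right hLf (norm_nonneg _)
    calc f u - f v ≤ (Lf : ℝ) * ‖u - v‖ := h2.trans this
      _ ≤ L * ‖u - v‖ := h3
  have h2 : f (proj y) - f (proj x) ≤ L * a := by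
    have := lip (proj y) (proj x); exact this
  have h3 : f (proj z) - f (proj y) ≤ L * b := by
    have h := lip (proj z) (proj y)
    have hb' : ‖proj z - proj y‖ ≤ b := by
      rw [hb, ← norm_neg (y - z), neg_sub]; exact norm_proj_sub_le z y
    nlinarith [norm_nonneg (proj z - proj y)]
  have h4 : z (Fin.last m) < f (proj z) := hz
  have h5 : y (Fin.last m) - z (Fin.last m) ≤ b := by
    have : |(y - z) (Fin.last m)| ≤ b := abs_last_le (y - z)
    have he : (y - z) (Fin.last m) = y (Fin.last m) - z (Fin.last m) := rfl
    rw [he] at this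
    exact (le_abs_self _).trans this
  have h6 : ‖x - y‖ ≤ a + A := by
    have := norm_le_proj_add (x - y)
    have he : (x - y) (Fin.last m) = x (Fin.last m) - y (Fin.last m) := rfl
    have hxg : x (Fin.last m) = f (proj x) := hx
    have hA0 : 0 < A := lt_of_le_of_lt (by positivity) h1
    have habs : |(x - y) (Fin.last m)| = A := by
      rw [he, hxg, abs_sub_comm]; exact abs_of_pos hA0
    have hpr : ‖proj (x - y)‖ = a := by rw [proj_sub, ← norm_neg, neg_sub]
    rw [habs, hpr] at this; exact this
  have ha0 : 0 ≤ a := norm_nonneg _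
  have hb0 : 0 ≤ b := norm_nonneg _
  nlinarith [mul_nonneg (sub_nonneg.2 hL1.le) ha0, mul_nonneg (sub_nonneg.2 hL1.le) hb0]

/-- For `K ∈ 𝒦` with size constant `C₀`, `f` Lipschitz,
`L > max{1, Lip f}`, `ν` a finite measure, `g ∈ L¹(ν)`, `x ∈ C_f`, `y ∈ Γ(x)` and
`r = |x - y|`: `∫_{H_f^- ∩ B(x,2r)} |K(y-z)| |g(z)| dν(z) ≤ (16L)^{n-1} C₀ M_ν g(x)`. -/
theorem statement12 (m : ℕ) (hm : 1 ≤ m)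
    (K : EuclideanSpace ℝ (Fin (m + 1)) → ℝ) (C₀ C₁ : ℝ)
    (hK_diff : ContDiffOn ℝ 1 K {0}ᶜ)
    (hK_anti : ∀ x : EuclideanSpace ℝ (Fin (m + 1)), x ≠ 0 → K (-x) = -K x)
    (hK_size : ∀ x : EuclideanSpace ℝ (Fin (m + 1)), x ≠ 0 →
      |K x| ≤ C₀ * ‖x‖ ^ (-(m : ℝ)))
    (hK_grad : ∀ x : EuclideanSpace ℝ (Fin (m + 1)), x ≠ 0 →
      ‖fderiv ℝ K x‖ ≤ C₁ * ‖x‖ ^ (-(m : ℝ) - 1))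
    (f : EuclideanSpace ℝ (Fin m) → ℝ) (Lf : NNReal) (hf : LipschitzWith Lf f)
    (L : ℝ) (hL : max 1 (Lf : ℝ) < L)
    (ν : Measure (EuclideanSpace ℝ (Fin (m + 1)))) [IsFiniteMeasure ν]
    (g : EuclideanSpace ℝ (Fin (m + 1)) → ℝ) (hg : Integrable g ν)
    (x : EuclideanSpace ℝ (Fin (m + 1))) (hx : x ∈ graphSet f)
    (y : EuclideanSpace ℝ (Fin (m + 1))) (hy : y ∈ cone f L (proj x)) :
    ∫⁻ z in lowerSet f ∩ closedBall x (2 * ‖x - y‖),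
        ENNReal.ofReal (|K (y - z)| * |g z|) ∂ν
      ≤ ENNReal.ofReal ((16 * L) ^ m * C₀) * radialMax ν g x := by
  have hL1 : 1 < L := lt_of_le_of_lt (le_max_left _ _) hL
  have hL0 : 0 < L := lt_trans one_pos hL1
  set r := ‖x - y‖ with hrdef
  -- r > 0
  have hr0 : 0 < r := by
    have hA0 : 0 < y (Fin.last m) - f (proj x) :=
      lt_of_le_of_lt (by positivity) hy
    have hxg : x (Fin.last m) = f (proj x) := hx
    have hne : x ≠ y := by
      intro h
      rw [← h, hxg] at hA0
      simp at hA0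
    rw [hrdef]
    exact norm_sub_pos_iff.mpr hne
  -- C₀ ≥ 0
  have hC0 : 0 ≤ C₀ := by
    have hxyne : x - y ≠ 0 := by
      intro h; rw [hrdef] at hr0; rw [h] at hr0; simp at hr0
    have h1 := hK_size (x - y) hxyne
    have h2 : (0 : ℝ) < ‖x - y‖ ^ (-(m : ℝ)) := Real.rpow_pos_of_pos hr0 _
    nlinarith [abs_nonneg (K (x - y))]
  set c := C₀ * (8 * L / r) ^ m with hcdef
  have hc0 : 0 ≤ c := by positivity
  -- pointwise bound on the lower set
  have hpt : ∀ z ∈ lowerSet f ∩ closedBall x (2 * r),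
      ENNReal.ofReal (|K (y - z)| * |g z|) ≤ ENNReal.ofReal c * ENNReal.ofReal |g z| := by
    intro z hz
    have hkey : r ≤ 8 * L * ‖y - z‖ := geom_key f Lf hf L hL x y z hx hy hz.1
    have hd0 : 0 < ‖y - z‖ := by nlinarith
    have hne : y - z ≠ 0 := by
      intro h; rw [h] at hd0; simp at hd0
    have hKb : |K (y - z)| ≤ c := by
      have h1 := hK_size (y - z) hne
      have h2 : ‖y - z‖ ^ (-(m : ℝ)) = (‖y - z‖ ^ m)⁻¹ := by
        rw [Real.rpow_neg (norm_nonneg _), Real.rpow_natCast]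
      have h3 : r / (8 * L) ≤ ‖y - z‖ := by
        rw [div_le_iff₀ (by positivity)]; nlinarith
      have h4 : (r / (8 * L)) ^ m ≤ ‖y - z‖ ^ m :=
        pow_le_pow_left₀ (by positivity) h3 m
      have h5 : (‖y - z‖ ^ m)⁻¹ ≤ ((r / (8 * L)) ^ m)⁻¹ :=
        inv_anti₀ (by positivity) h4
      have h6 : ((r / (8 * L)) ^ m)⁻¹ = (8 * L / r) ^ m := by
        rw [← inv_pow, inv_div]
      calc |K (y - z)| ≤ C₀ * ‖y - z‖ ^ (-(m : ℝ)) := h1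
        _ = C₀ * (‖y - z‖ ^ m)⁻¹ := by rw [h2]
        _ ≤ C₀ * ((r / (8 * L)) ^ m)⁻¹ := by
            exact mul_le_mul_of_nonneg_left h5 hC0
        _ = c := by rw [hcdef, h6]
    rw [← ENNReal.ofReal_mul hc0]
    exact ENNReal.ofReal_le_ofReal
      (mul_le_mul_of_nonneg_right hKb (abs_nonneg _))
  -- measurability of the lower set
  have hlip_last : LipschitzWith 1 (fun p : EuclideanSpace ℝ (Fin (m + 1)) =>
      p (Fin.last m)) := by
    apply LipschitzWith.of_dist_le_mul
    intro p q
    rw [Real.dist_eq, dist_eq_norm, NNReal.coe_one, one_mul]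
    exact abs_last_le (p - q)
  have hlip_proj : LipschitzWith 1 (proj (m := m)) := by
    apply LipschitzWith.of_dist_le_mul
    intro p q
    rw [dist_eq_norm, dist_eq_norm, NNReal.coe_one, one_mul]
    exact norm_proj_sub_le p q
  have hms : MeasurableSet (lowerSet f ∩ closedBall x (2 * r)) := by
    apply MeasurableSet.inter
    · exact measurableSet_lt hlip_last.continuous.measurable
        ((hf.continuous.comp hlip_proj.continuous).measurable)
    · exact measurableSet_closedBall
  calc ∫⁻ z in lowerSet f ∩ closedBall x (2 * r),
        ENNReal.ofReal (|K (y - z)| * |g z|) ∂ν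
      ≤ ∫⁻ z in lowerSet f ∩ closedBall x (2 * r),
        ENNReal.ofReal c * ENNReal.ofReal |g z| ∂ν := setLIntegral_mono' hms hpt
    _ ≤ ∫⁻ z in closedBall x (2 * r),
        ENNReal.ofReal c * ENNReal.ofReal |g z| ∂ν :=
        lintegral_mono_set inter_subset_right
    _ = ENNReal.ofReal c * ∫⁻ z in closedBall x (2 * r),
        ENNReal.ofReal |g z| ∂ν :=
        lintegral_const_mul' _ _ ENNReal.ofReal_ne_top
    _ ≤ ENNReal.ofReal ((16 * L) ^ m * C₀) * radialMax ν g x := by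
        set I := ∫⁻ z in closedBall x (2 * r), ENNReal.ofReal |g z| ∂ν with hI
        have hM : ENNReal.ofReal ((2 * r) ^ (-(m : ℝ))) * I ≤ radialMax ν g x := by
          rw [radialMax]
          exact le_iSup₂ (f := fun ρ (_ : 0 < ρ) =>
            ENNReal.ofReal (ρ ^ (-(m : ℝ))) * ∫⁻ z in closedBall x ρ,
              ENNReal.ofReal |g z| ∂ν) (2 * r) (by positivity)
        have hceq : ENNReal.ofReal c
            = ENNReal.ofReal ((16 * L) ^ m * C₀) * ENNReal.ofReal ((2 * r) ^ (-(m : ℝ))) := by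
          rw [← ENNReal.ofReal_mul (by positivity)]
          congr 1
          rw [Real.rpow_neg (by positivity), Real.rpow_natCast, hcdef]
          rw [mul_comm ((16 * L) ^ m) C₀, mul_assoc]
          congr 1
          rw [← inv_pow, ← mul_pow]
          congr 1
          field_simp
          ring
        calc ENNReal.ofReal c * I
            = ENNReal.ofReal ((16 * L) ^ m * C₀) *
              (ENNReal.ofReal ((2 * r) ^ (-(m : ℝ))) * I) := by
              rw [hceq, mul_assoc]
          _ ≤ ENNReal.ofReal ((16 * L) ^ m * C₀) * radialMax ν g x :=
              mul_le_mul_right hM _
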